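/- Let Y, C_1, …, C_n (n ≥ 1) be random variables taking values in finite sets on a common finite probability space, let N = {1, …, n}, and let w_n(A) = |A|!·(n − |A| − 1)!/n!. Define φ_k = Σ_{A ⊆ N∖{k}} w_n(A) · I(Y; C_k | C_A) for each k ∈ N. Then the Shapley values partition the total input-induced uncertainty: Σ_{k=1}^{n} φ_k = I(Y; C), where C = (C_1, …, C_n). -/

import Mathlib

/-- Probability of the event `Z = z` under the mass function `P`. -/
noncomputable def probOf {Ω : Type} [Fintype Ω] (P : Ω → ℝ) {α : Type} [DecidableEq α]
    (Z : Ω → α) (z : α) : ℝ :=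
  ∑ ω, if Z ω = z then P ω else 0

/-- Shannon entropy `H(Y) = ∑_y negMulLog P(Y = y)`. -/
noncomputable def entropyOf {Ω : Type} [Fintype Ω] (P : Ω → ℝ) {α : Type} [Fintype α]
    [DecidableEq α] (Y : Ω → α) : ℝ :=
  ∑ y, Real.negMulLog (probOf P Y y)

/-- Conditional entropy `H(Y | Z) = ∑_z P(Z = z) · H(Y | Z = z)`, where the inner entropy is
the Shannon entropy of the conditional distribution of `Y` given `Z = z` (terms with
`P(Z = z) = 0` contribute `0`, since division by zero yields zero). -/
noncomputable def condEntropyOf {Ω : Type} [Fintype Ω] (P : Ω → ℝ) {α β : Type}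
    [Fintype α] [DecidableEq α] [Fintype β] [DecidableEq β] (Y : Ω → α) (Z : Ω → β) : ℝ :=
  ∑ z, probOf P Z z *
    ∑ y, Real.negMulLog (probOf P (fun ω => (Y ω, Z ω)) (y, z) / probOf P Z z)

/-- Mutual information `I(Y; Z) = H(Y) − H(Y | Z)`. -/
noncomputable def mutualInfoOf {Ω : Type} [Fintype Ω] (P : Ω → ℝ) {α β : Type}
    [Fintype α] [DecidableEq α] [Fintype β] [DecidableEq β] (Y : Ω → α) (Z : Ω → β) : ℝ :=
  entropyOf P Y - condEntropyOf P Y Z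

/-- Conditional mutual information `I(Y; Z | W) = H(Y | W) − H(Y | (Z, W))`. -/
noncomputable def condMutualInfoOf {Ω : Type} [Fintype Ω] (P : Ω → ℝ) {α β γ : Type}
    [Fintype α] [DecidableEq α] [Fintype β] [DecidableEq β] [Fintype γ] [DecidableEq γ]
    (Y : Ω → α) (Z : Ω → β) (W : Ω → γ) : ℝ :=
  condEntropyOf P Y W - condEntropyOf P Y (fun ω => (Z ω, W ω))

/-- The tuple `C_A = (C_j)_{j ∈ A}` of the random variables indexed by the subset `A`. -/
def restrictRV {Ω : Type} {n : ℕ} {𝒞 : Fin n → Type} (C : ∀ i, Ω → 𝒞 i)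
    (A : Finset (Fin n)) : Ω → (∀ j : {x // x ∈ A}, 𝒞 j.1) :=
  fun ω j => C j.1 ω

section helpers
variable {Ω : Type} [Fintype Ω]

lemma probOf_nonneg (P : Ω → ℝ) (hP0 : ∀ ω, 0 ≤ P ω) {α : Type} [DecidableEq α]
    (Z : Ω → α) (z : α) : 0 ≤ probOf P Z z := by
  apply Finset.sum_nonneg
  intro ω _
  split <;> simp [hP0 ω]

lemma sum_probOf_fst (P : Ω → ℝ) {α β : Type} [Fintype α] [DecidableEq α] [DecidableEq β]
    (Y : Ω → α) (Z : Ω → β) (z : β) :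
    ∑ y, probOf P (fun ω => (Y ω, Z ω)) (y, z) = probOf P Z z := by
  unfold probOf
  rw [Finset.sum_comm]
  refine Finset.sum_congr rfl fun ω _ => ?_
  by_cases h : Z ω = z <;> simp [h, Prod.ext_iff]

lemma mul_negMulLog_div (p q : ℝ) (hq : q ≠ 0) :
    q * Real.negMulLog (p / q) = Real.negMulLog p + p * Real.log q := by
  rcases eq_or_ne p 0 with rfl | hp
  · simp [Real.negMulLog]
  · unfold Real.negMulLog
    rw [Real.log_div hp hq]
    field_simp
    ring

lemma condEntropy_eq (P : Ω → ℝ) (hP0 : ∀ ω, 0 ≤ P ω)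
    {α β : Type} [Fintype α] [DecidableEq α] [Fintype β] [DecidableEq β]
    (Y : Ω → α) (Z : Ω → β) :
    condEntropyOf P Y Z = entropyOf P (fun ω => (Y ω, Z ω)) - entropyOf P Z := by
  unfold condEntropyOf entropyOf
  rw [Fintype.sum_prod_type_right, ← Finset.sum_sub_distrib]
  refine Finset.sum_congr rfl fun z _ => ?_
  rcases eq_or_ne (probOf P Z z) 0 with hq | hq
  · have hall : ∀ y ∈ (Finset.univ : Finset α),
        probOf P (fun ω => (Y ω, Z ω)) (y, z) = 0 := by
      rw [← Finset.sum_eq_zero_iff_of_nonneg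
        (fun y _ => probOf_nonneg P hP0 _ _)]
      rw [sum_probOf_fst P Y Z z, hq]
    rw [hq]
    simp only [zero_mul]
    rw [Finset.sum_congr rfl fun y hy => by rw [hall y hy]]
    simp [Real.negMulLog]
  · have key : ∀ y : α, probOf P Z z *
        Real.negMulLog (probOf P (fun ω => (Y ω, Z ω)) (y, z) / probOf P Z z)
        = Real.negMulLog (probOf P (fun ω => (Y ω, Z ω)) (y, z))
          + probOf P (fun ω => (Y ω, Z ω)) (y, z) * Real.log (probOf P Z z) :=
      fun y => mul_negMulLog_div _ _ hq
    rw [Finset.mul_sum, Finset.sum_congr rfl fun y _ => key y, Finset.sum_add_distrib,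
      ← Finset.sum_mul, sum_probOf_fst P Y Z z]
    unfold Real.negMulLog
    ring

lemma entropy_comp_injective (P : Ω → ℝ) {β γ : Type} [Fintype β] [DecidableEq β]
    [Fintype γ] [DecidableEq γ] (Z : Ω → β) (u : β → γ) (hu : Function.Injective u) :
    entropyOf P (fun ω => u (Z ω)) = entropyOf P Z := by
  unfold entropyOf
  have h1 : ∀ b : β, probOf P (fun ω => u (Z ω)) (u b) = probOf P Z b := by
    intro b
    exact Finset.sum_congr rfl fun ω _ => by simp only [hu.eq_iff]
  rw [← Finset.sum_subset (Finset.subset_univ (Finset.univ.image u))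
    (fun c _ hc => ?_)]
  · rw [Finset.sum_image (fun b _ b' _ h => hu h)]
    exact Finset.sum_congr rfl fun b _ => by rw [h1 b]
  · have h0 : probOf P (fun ω => u (Z ω)) c = 0 := by
      apply Finset.sum_eq_zero
      intro ω _
      have : u (Z ω) ≠ c := fun h => hc (h ▸ Finset.mem_image_of_mem u (Finset.mem_univ _))
      simp [this]
    rw [h0]
    simp [Real.negMulLog]

end helpers

section helpers2
variable {Ω : Type} [Fintype Ω]

set_option maxHeartbeats 1000000 in
lemma condEntropy_comp_injective (P : Ω → ℝ) (hP0 : ∀ ω, 0 ≤ P ω)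
    {α β γ : Type} [Fintype α] [DecidableEq α] [Fintype β] [DecidableEq β]
    [Fintype γ] [DecidableEq γ] (Y : Ω → α) (Z : Ω → β) (u : β → γ)
    (hu : Function.Injective u) :
    condEntropyOf P Y (fun ω => u (Z ω)) = condEntropyOf P Y Z := by
  rw [condEntropy_eq P hP0, condEntropy_eq P hP0,
    entropy_comp_injective P Z u hu]
  congr 1
  have hmap : Function.Injective (fun p : α × β => (p.1, u p.2)) := by
    intro p q h
    simp only [Prod.mk.injEq] at h
    exact Prod.ext h.1 (hu h.2)
  exact entropy_comp_injective P (fun ω => (Y ω, Z ω)) _ hmap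

lemma condEntropy_const (P : Ω → ℝ) (hP0 : ∀ ω, 0 ≤ P ω) (hP1 : ∑ ω, P ω = 1)
    {α β : Type} [Fintype α] [DecidableEq α] [Fintype β] [DecidableEq β]
    [Subsingleton β] [Nonempty β] (Y : Ω → α) (Z : Ω → β) :
    condEntropyOf P Y Z = entropyOf P Y := by
  obtain ⟨z0⟩ := (inferInstance : Nonempty β)
  have hZ : ∀ ω, Z ω = z0 := fun ω => Subsingleton.elim _ _
  rw [condEntropy_eq P hP0]
  have h1 : entropyOf P (fun ω => (Y ω, Z ω)) = entropyOf P Y := by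
    have hinj : Function.Injective (fun y : α => (y, z0)) := fun a b h => by
      simpa using congrArg Prod.fst h
    have := entropy_comp_injective P Y (fun y => (y, z0)) hinj
    rw [← this]
    congr 1
    funext ω
    rw [hZ]
  have h2 : entropyOf P Z = 0 := by
    have huniv : (Finset.univ : Finset β) = {z0} := by
      ext z; simp [Subsingleton.elim z z0]
    unfold entropyOf
    rw [huniv, Finset.sum_singleton]
    have hp : probOf P Z z0 = 1 := by
      unfold probOf; simp [hZ, hP1]
    simp [hp, Real.negMulLog]
  rw [h1, h2, sub_zero]

end helpers2

lemma coeff_lemma (n : ℕ) (hn : 1 ≤ n) (b : ℕ) (hb : b ≤ n) :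
    ((n - b : ℕ) : ℝ) * ((b.factorial * (n - b - 1).factorial : ℝ) / n.factorial)
      - (b : ℝ) * (((b - 1).factorial * (n - (b - 1) - 1).factorial : ℝ) / n.factorial)
    = (if b = 0 then 1 else 0) - (if b = n then 1 else 0) := by
  have hn0 : (n.factorial : ℝ) ≠ 0 := by
    exact_mod_cast n.factorial_ne_zero
  rcases eq_or_ne b 0 with rfl | hb0
  · have hne : (0 : ℕ) ≠ n := by omega
    have hkey : n * (n - 1).factorial = n.factorial := Nat.mul_factorial_pred (by omega)
    simp only [if_pos rfl, if_neg hne, Nat.sub_zero, Nat.factorial_zero, Nat.cast_one,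
      Nat.cast_zero, zero_mul, sub_zero, one_mul, if_true]
    rw [mul_div_assoc', div_eq_one_iff_eq hn0]
    exact_mod_cast hkey
  · rcases eq_or_ne b n with hbn | hbn
    · have h1 : n - (b - 1) - 1 = 0 := by omega
      have h2 : n - b = 0 := by omega
      have hkey : (b : ℝ) * ((b - 1).factorial : ℝ) = (n.factorial : ℝ) := by
        have h3 : b * (b - 1).factorial = n.factorial := by
          rw [Nat.mul_factorial_pred (by omega), hbn]
        exact_mod_cast h3
      simp only [if_neg hb0, if_pos hbn, h1, h2, Nat.factorial_zero, Nat.cast_zero, zero_mul,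
        zero_sub, Nat.cast_one, mul_one]
      rw [mul_div_assoc', hkey, div_self hn0]
    · have hblt : b < n := lt_of_le_of_ne hb hbn
      have h1 : n - (b - 1) - 1 = n - b := by omega
      have h2 : (n - b) * (b.factorial * (n - b - 1).factorial)
          = b * ((b - 1).factorial * (n - b).factorial) := by
        have e1 : (n - b) * (n - b - 1).factorial = (n - b).factorial :=
          Nat.mul_factorial_pred (by omega)
        have e2 : b * (b - 1).factorial = b.factorial := Nat.mul_factorial_pred (by omega)
        calc (n - b) * (b.factorial * (n - b - 1).factorial)
            = b.factorial * ((n - b) * (n - b - 1).factorial) := by ring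
        _ = b.factorial * (n - b).factorial := by rw [e1]
        _ = (b * (b - 1).factorial) * (n - b).factorial := by rw [e2]
        _ = b * ((b - 1).factorial * (n - b).factorial) := by ring
      simp only [if_neg hb0, if_neg hbn, sub_zero, h1]
      rw [sub_eq_zero, mul_div_assoc', mul_div_assoc', div_eq_div_iff hn0 hn0]
      have h4 := congrArg (fun x : ℕ => (x : ℝ)) h2
      push_cast at h4
      rw [h4]

lemma shapley_sum (n : ℕ) (hn : 1 ≤ n) (f : Finset (Fin n) → ℝ) :
    ∑ k : Fin n, ∑ A ∈ ((Finset.univ : Finset (Fin n)).erase k).powerset,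
      ((A.card.factorial * (n - A.card - 1).factorial : ℝ) / n.factorial) *
        (f A - f (insert k A))
    = f ∅ - f Finset.univ := by
  classical
  set w : ℕ → ℝ := fun a => ((a.factorial * (n - a - 1).factorial : ℝ) / n.factorial) with hw
  have hpow : ∀ k : Fin n, ((Finset.univ : Finset (Fin n)).erase k).powerset
      = Finset.univ.filter (fun A => k ∉ A) := by
    intro k; ext A
    simp [Finset.subset_erase]
  have step1 : ∀ k : Fin n,
      ∑ A ∈ ((Finset.univ : Finset (Fin n)).erase k).powerset,
        w A.card * (f A - f (insert k A))
      = (∑ A : Finset (Fin n), if k ∉ A then w A.card * f A else 0)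
        - (∑ B : Finset (Fin n), if k ∈ B then w (B.card - 1) * f B else 0) := by
    intro k
    have hsplit : ∑ A ∈ ((Finset.univ : Finset (Fin n)).erase k).powerset,
        w A.card * (f A - f (insert k A))
        = (∑ A ∈ Finset.univ.filter (fun A => k ∉ A), w A.card * f A)
          - (∑ A ∈ Finset.univ.filter (fun A => k ∉ A), w A.card * f (insert k A)) := by
      rw [hpow k, ← Finset.sum_sub_distrib]
      exact Finset.sum_congr rfl fun A _ => by ring
    rw [hsplit]
    congr 1
    · rw [Finset.sum_filter]
    · have hbij : ∑ A ∈ Finset.univ.filter (fun A => k ∉ A), w A.card * f (insert k A)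
          = ∑ B ∈ Finset.univ.filter (fun B => k ∈ B), w (B.card - 1) * f B := by
        refine Finset.sum_nbij' (i := fun A => insert k A) (j := fun B => B.erase k)
          ?_ ?_ ?_ ?_ ?_
        · intro A hA
          simp [Finset.mem_insert_self]
        · intro B hB
          simp
        · intro A hA
          simp only [Finset.mem_filter] at hA
          exact Finset.erase_insert hA.2
        · intro B hB
          simp only [Finset.mem_filter] at hB
          exact Finset.insert_erase hB.2
        · intro A hA
          simp only [Finset.mem_filter] at hA
          rw [Finset.card_insert_of_notMem hA.2, Nat.add_sub_cancel]
      rw [hbij, Finset.sum_filter]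
  have hcard : ∀ A : Finset (Fin n), (A.card = n) ↔ A = Finset.univ := by
    intro A
    simpa using Finset.card_eq_iff_eq_univ (s := A)
  calc (∑ k : Fin n, ∑ A ∈ ((Finset.univ : Finset (Fin n)).erase k).powerset,
          w A.card * (f A - f (insert k A)))
      = ∑ k : Fin n, ((∑ A : Finset (Fin n), if k ∉ A then w A.card * f A else 0)
          - (∑ B : Finset (Fin n), if k ∈ B then w (B.card - 1) * f B else 0)) :=
        Finset.sum_congr rfl fun k _ => step1 k
    _ = (∑ k : Fin n, ∑ A : Finset (Fin n), if k ∉ A then w A.card * f A else 0)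
          - (∑ k : Fin n, ∑ B : Finset (Fin n), if k ∈ B then w (B.card - 1) * f B else 0) :=
        Finset.sum_sub_distrib _ _
    _ = (∑ A : Finset (Fin n), ∑ k : Fin n, if k ∉ A then w A.card * f A else 0)
          - (∑ B : Finset (Fin n), ∑ k : Fin n, if k ∈ B then w (B.card - 1) * f B else 0) := by
        congr 1 <;> exact Finset.sum_comm
    _ = ∑ A : Finset (Fin n), ((((n - A.card : ℕ) : ℝ) * w A.card
          - (A.card : ℝ) * w (A.card - 1)) * f A) := by
        rw [← Finset.sum_sub_distrib]
        refine Finset.sum_congr rfl fun A _ => ?_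
        have c1 : (∑ k : Fin n, if k ∉ A then w A.card * f A else 0)
            = ((n - A.card : ℕ) : ℝ) * (w A.card * f A) := by
          rw [← Finset.sum_filter, Finset.sum_const, nsmul_eq_mul]
          have h5 : Finset.univ.filter (fun k => k ∉ A) = Aᶜ := by ext x; simp
          rw [h5, Finset.card_compl, Fintype.card_fin]
        have c2 : (∑ k : Fin n, if k ∈ A then w (A.card - 1) * f A else 0)
            = (A.card : ℝ) * (w (A.card - 1) * f A) := by
          rw [← Finset.sum_filter, Finset.sum_const, nsmul_eq_mul]
          have h5 : Finset.univ.filter (fun k => k ∈ A) = A := by ext x; simp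
          rw [h5]
        rw [c1, c2]; ring
    _ = ∑ A : Finset (Fin n), (((if A.card = 0 then (1:ℝ) else 0)
          - (if A.card = n then 1 else 0)) * f A) := by
        refine Finset.sum_congr rfl fun A _ => ?_
        have hle : A.card ≤ n := by
          simpa using Finset.card_le_univ A
        simp only [hw]
        rw [coeff_lemma n hn A.card hle]
    _ = f ∅ - f Finset.univ := by
        simp only [sub_mul, Finset.card_eq_zero, hcard, ite_mul, one_mul, zero_mul]
        rw [Finset.sum_sub_distrib]
        rw [Finset.sum_ite_eq' Finset.univ ∅ f, Finset.sum_ite_eq' Finset.univ Finset.univ f]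
        simp


section proj
variable {n : ℕ} {𝒞 : Fin n → Type}

def projIns (k : Fin n) (A : Finset (Fin n)) :
    (∀ j : {x // x ∈ insert k A}, 𝒞 j.1) → 𝒞 k × (∀ j : {x // x ∈ A}, 𝒞 j.1) :=
  fun g => (g ⟨k, Finset.mem_insert_self k A⟩,
    fun j => g ⟨j.1, Finset.mem_insert_of_mem j.2⟩)

lemma projIns_inj (k : Fin n) (A : Finset (Fin n)) :
    Function.Injective (projIns (𝒞 := 𝒞) k A) := by
  intro g g' h
  simp only [projIns, Prod.mk.injEq] at h
  funext j
  rcases j with ⟨j, hj⟩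
  rcases Finset.mem_insert.1 hj with rfl | hA
  · exact h.1
  · exact congrFun h.2 ⟨j, hA⟩

def projUniv : (∀ i, 𝒞 i) → (∀ j : {x // x ∈ (Finset.univ : Finset (Fin n))}, 𝒞 j.1) :=
  fun g j => g j.1

lemma projUniv_inj : Function.Injective (projUniv (𝒞 := 𝒞)) := by
  intro g g' h
  funext i
  exact congrFun h ⟨i, Finset.mem_univ i⟩

end proj


/-- With `φ_k = Σ_{A ⊆ N∖{k}} w_n(A) · I(Y; C_k | C_A)` where
`w_n(A) = |A|!·(n − |A| − 1)!/n!`, the Shapley values partition the total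
input-induced uncertainty: `Σ_{k=1}^{n} φ_k = I(Y; C)` with `C = (C_1, …, C_n)`. -/
theorem stmt3 {Ω : Type} [Fintype Ω] (P : Ω → ℝ)
    (hP0 : ∀ ω, 0 ≤ P ω) (hP1 : ∑ ω, P ω = 1)
    (n : ℕ) (hn : 1 ≤ n)
    {𝒴 : Type} [Fintype 𝒴] [DecidableEq 𝒴] (Y : Ω → 𝒴)
    {𝒞 : Fin n → Type} [∀ i, Fintype (𝒞 i)] [∀ i, DecidableEq (𝒞 i)]
    (C : ∀ i, Ω → 𝒞 i)
    (φ : Fin n → ℝ)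
    (hφ : ∀ k, φ k = ∑ A ∈ (Finset.univ.erase k).powerset,
      ((A.card.factorial * (n - A.card - 1).factorial : ℝ) / n.factorial) *
        condMutualInfoOf P Y (C k) (restrictRV C A)) :
    ∑ k, φ k = mutualInfoOf P Y (fun ω => fun i => C i ω) := by
  classical
  set f : Finset (Fin n) → ℝ := fun A => condEntropyOf P Y (restrictRV C A) with hf
  have hins : ∀ (k : Fin n) (A : Finset (Fin n)),
      condEntropyOf P Y (fun ω => (C k ω, restrictRV C A ω)) = f (insert k A) := by
    intro k A
    exact condEntropy_comp_injective P hP0 Y (restrictRV C (insert k A))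
      (projIns k A) (projIns_inj k A)
  have hsum : ∑ k, φ k = f ∅ - f Finset.univ := by
    rw [← shapley_sum n hn f]
    refine Finset.sum_congr rfl fun k _ => ?_
    rw [hφ k]
    refine Finset.sum_congr rfl fun A _ => ?_
    simp only [condMutualInfoOf]
    rw [hins k A]
  rw [hsum]
  simp only [mutualInfoOf]
  congr 1
  · haveI : IsEmpty {x // x ∈ (∅ : Finset (Fin n))} :=
      ⟨fun x => (Finset.notMem_empty _ x.2)⟩
    exact condEntropy_const P hP0 hP1 Y (restrictRV C ∅)
  · exact condEntropy_comp_injective P hP0 Y (fun ω => fun i => C i ω)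
      (projUniv (𝒞 := 𝒞)) projUniv_inj
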